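/- Let $E$ be an infinite-dimensional complex Banach space, $x_0 \in E$ with $\|x_0\| = 1$, and $L \in E^*$ with $\|L\| = 1$ and $L(x_0) = 1$. Then the function $f(x) = \log(1 - L(x))$ is holomorphic on $B_E$, satisfies $(1-\|x\|^2)\|f'(x)\| \leq 2$ for all $x \in B_E$ (so $f \in \mathcal{B}_{nat}(B_E)$), but $f$ is unbounded on $B_E$. Hence $H^\infty(B_E) \subsetneq \mathcal{B}_{nat}(B_E)$. -/

import Mathlib

open Metric Set

private lemma aux_slit {E : Type*} [NormedAddCommGroup E] [NormedSpace ℂ E]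
    (L : E →L[ℂ] ℂ) (hL : ‖L‖ = 1) {x : E} (hx : ‖x‖ < 1) :
    (1 - L x).re > 0 := by
  have h1 : ‖L x‖ ≤ ‖x‖ := by
    calc ‖L x‖ ≤ ‖L‖ * ‖x‖ := L.le_opNorm x
    _ = ‖x‖ := by rw [hL, one_mul]
  have h2 : |(L x).re| ≤ ‖L x‖ := Complex.abs_re_le_norm _
  have : (L x).re < 1 := lt_of_le_of_lt (le_trans (le_abs_self _) (le_trans h2 h1)) hx
  simp [Complex.sub_re]; linarith

private lemma aux_hasFDeriv {E : Type*} [NormedAddCommGroup E] [NormedSpace ℂ E]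
    (L : E →L[ℂ] ℂ) (hL : ‖L‖ = 1) {x : E} (hx : ‖x‖ < 1) :
    HasFDerivAt (fun x => Complex.log (1 - L x)) ((1 - L x)⁻¹ • (-L)) x := by
  have hs : (1 - L x) ∈ Complex.slitPlane := Or.inl (aux_slit L hL hx)
  have hg : HasFDerivAt (fun y => 1 - L y) (-L : E →L[ℂ] ℂ) x := by
    exact (L.hasFDerivAt (x := x)).const_sub (1 : ℂ)
  exact (Complex.hasDerivAt_log hs).comp_hasFDerivAt x hg

/-- For an infinite-dimensional complex Banach space `E`, `x₀` of norm one and a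
norm-one functional `L` with `L x₀ = 1`, the function `f x = log (1 - L x)` is
holomorphic on `B_E`, satisfies `(1-‖x‖²)‖f'(x)‖ ≤ 2`, but is unbounded on
`B_E`; hence `H^∞(B_E) ⊊ ℬ_nat(B_E)`. -/
theorem hinf_proper_subset_nat_bloch {E : Type*} [NormedAddCommGroup E] [NormedSpace ℂ E]
    [CompleteSpace E] (hinf : ¬ FiniteDimensional ℂ E)
    (x₀ : E) (hx₀ : ‖x₀‖ = 1) (L : E →L[ℂ] ℂ) (hL : ‖L‖ = 1) (hLx₀ : L x₀ = 1) :
    DifferentiableOn ℂ (fun x => Complex.log (1 - L x)) (ball (0 : E) 1) ∧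
    (∀ x ∈ ball (0 : E) 1,
      (1 - ‖x‖ ^ 2) * ‖fderiv ℂ (fun x => Complex.log (1 - L x)) x‖ ≤ 2) ∧
    ¬ BddAbove ((fun x => ‖Complex.log (1 - L x)‖) '' ball (0 : E) 1) := by
  refine ⟨?_, ?_, ?_⟩
  · intro x hx
    rw [mem_ball_zero_iff] at hx
    exact ((aux_hasFDeriv L hL hx).differentiableAt).differentiableWithinAt
  · intro x hx
    rw [mem_ball_zero_iff] at hx
    have hd := aux_hasFDeriv L hL hx
    rw [hd.fderiv]
    have hx0 : (0:ℝ) ≤ ‖x‖ := norm_nonneg x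
    have hLx : ‖L x‖ ≤ ‖x‖ := by
      calc ‖L x‖ ≤ ‖L‖ * ‖x‖ := L.le_opNorm x
      _ = ‖x‖ := by rw [hL, one_mul]
    have hlb : 1 - ‖x‖ ≤ ‖(1 : ℂ) - L x‖ := by
      have h := norm_sub_norm_le (1 : ℂ) (L x)
      rw [norm_one] at h
      linarith
    have hpos : (0:ℝ) < ‖(1:ℂ) - L x‖ := lt_of_lt_of_le (by linarith) hlb
    have hnorm : ‖(1 - L x)⁻¹ • (-L)‖ = ‖(1:ℂ) - L x‖⁻¹ := by
      rw [norm_smul ((1 - L x)⁻¹) (-L), norm_neg, hL, mul_one, norm_inv]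
    rw [hnorm]
    rw [mul_inv_le_iff₀ hpos]
    have : 1 - ‖x‖ ^ 2 ≤ 2 * (1 - ‖x‖) := by nlinarith
    linarith [mul_le_mul_of_nonneg_left hlb (by norm_num : (0:ℝ) ≤ 2)]
  · rintro ⟨M, hM⟩
    set s : ℝ := Real.exp (-(|M| + 1)) with hs
    have hs0 : 0 < s := Real.exp_pos _
    have hs1 : s < 1 := by
      rw [hs]
      have : -(|M| + 1) < 0 := by linarith [abs_nonneg M]
      calc Real.exp (-(|M| + 1)) < Real.exp 0 := Real.exp_lt_exp.mpr this
        _ = 1 := Real.exp_zero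
    set x : E := ((1 - s : ℝ) : ℂ) • x₀ with hxdef
    have hxb : x ∈ ball (0 : E) 1 := by
      rw [mem_ball_zero_iff, hxdef, norm_smul, hx₀, mul_one]
      simp only [Complex.norm_real, Real.norm_eq_abs]
      rw [abs_of_nonneg (by linarith)]
      linarith
    have hLx : L x = ((1 - s : ℝ) : ℂ) := by
      rw [hxdef, map_smul, hLx₀, smul_eq_mul, mul_one]
    have hval : (1 : ℂ) - L x = ((s : ℝ) : ℂ) := by
      rw [hLx]; push_cast; ring
    have hlog : Complex.log (1 - L x) = ((Real.log s : ℝ) : ℂ) := by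
      rw [hval, Complex.ofReal_log hs0.le]
    have hlogs : Real.log s = -(|M| + 1) := by
      rw [hs, Real.log_exp]
    have hle : ‖Complex.log (1 - L x)‖ ≤ M := hM ⟨x, hxb, rfl⟩
    rw [hlog, Complex.norm_real, Real.norm_eq_abs, hlogs, abs_neg,
      abs_of_nonneg (by positivity)] at hle
    have : M ≤ |M| := le_abs_self M
    linarith
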